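/- Let α₁,…,α_m and β₁,…,β_n be complex numbers, and suppose the multisets {α_k : |α_k| = ρ} and {β_l : |β_l| = ρ} differ, where ρ = max(max_k |α_k|, max_l |β_l|) > 0. Then limsup_{N→∞} |Σ_k α_k^N − Σ_l β_l^N|^{1/N} = ρ. -/

import Mathlib

open Filter Topology Finset

private lemma small_tendsto (ρ : ℝ) (hρ : 0 < ρ) (s : Multiset ℂ)
    (hs : ∀ z ∈ s, ‖z‖ < ρ) :
    Filter.Tendsto (fun N : ℕ => (s.map (fun z => (‖z‖ / ρ) ^ N)).sum)
      atTop (𝓝 0) := by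
  induction s using Multiset.induction_on with
  | empty => simpa using tendsto_const_nhds
  | cons a s ih =>
    simp only [Multiset.map_cons, Multiset.sum_cons]
    have h1 : Filter.Tendsto (fun N : ℕ => (‖a‖ / ρ) ^ N) atTop (𝓝 0) :=
      tendsto_pow_atTop_nhds_zero_of_lt_one
        (div_nonneg (norm_nonneg a) hρ.le)
        ((div_lt_one hρ).2 (hs a (by simp)))
    simpa using h1.add (ih (fun z hz => hs z (by simp [hz])))

private lemma freq_large (ρ : ℝ) (hρ : 0 < ρ) (T : Finset ℂ)
    (hT : ∀ w ∈ T, ‖w‖ = ρ) (c : ℂ → ℂ) (j : ℂ) (hj : j ∈ T) (hcj : c j ≠ 0) :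
    ∃ᶠ N in atTop, ‖c j‖ / 2 * ρ ^ N ≤ ‖∑ w ∈ T, c w * w ^ N‖ := by
  classical
  set u : ℂ → ℂ := fun w => w / (ρ : ℂ) with hu
  have hρC : (ρ : ℂ) ≠ 0 := by exact_mod_cast hρ.ne'
  have habs_u : ∀ w ∈ T, ‖u w‖ = 1 := by
    intro w hw
    simp [hu, map_div₀, hT w hw, Complex.norm_real, abs_of_pos hρ, div_self hρ.ne']
  set h : ℕ → ℂ := fun N => ∑ w ∈ T, c w * (u w) ^ N with hh
  -- relation between h and the original sum
  have hrel : ∀ N : ℕ, ‖∑ w ∈ T, c w * w ^ N‖ = ρ ^ N * ‖h N‖ := by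
    intro N
    have : ∑ w ∈ T, c w * w ^ N = (ρ : ℂ) ^ N * h N := by
      rw [hh, Finset.mul_sum]
      refine Finset.sum_congr rfl fun w hw => ?_
      rw [hu]
      rw [div_pow]; field_simp
    rw [this, norm_mul, norm_pow, Complex.norm_real, Real.norm_eq_abs, abs_of_pos hρ]
  -- the conjugate character
  set x : ℂ → ℂ := fun w => u w * (starRingEnd ℂ) (u j) with hx
  have hxj : x j = 1 := by
    rw [hx]
    simp only
    rw [Complex.mul_conj]
    rw [Complex.normSq_eq_norm_sq, habs_u j hj]
    norm_num
  have huj : ‖(starRingEnd ℂ) (u j)‖ = 1 := by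
    rw [Complex.norm_conj]; exact habs_u j hj
  have hx1 : ∀ w ∈ T, w ≠ j → x w ≠ 1 := by
    intro w hw hwj hcon
    apply hwj
    have h2 : x w * u j = u j := by rw [hcon, one_mul]
    rw [hx] at h2
    simp only at h2
    rw [mul_assoc, mul_comm ((starRingEnd ℂ) (u j)), Complex.mul_conj,
      Complex.normSq_eq_norm_sq, habs_u j hj] at h2
    simp at h2
    rw [hu] at h2
    field_simp at h2
    exact h2
  have hxabs : ∀ w ∈ T, ‖x w‖ = 1 := by
    intro w hw
    rw [hx]
    simp only
    rw [norm_mul, habs_u w hw, huj, one_mul]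
  -- Φ
  set Φ : ℕ → ℂ := fun M => ∑ N ∈ Finset.range M, h N * ((starRingEnd ℂ) (u j)) ^ N with hΦ
  have hΦeq : ∀ M, Φ M = (c j) * M + ∑ w ∈ T.erase j, c w * ∑ N ∈ Finset.range M, (x w) ^ N := by
    intro M
    rw [hΦ]
    simp only [hh, Finset.sum_mul]
    rw [Finset.sum_comm]
    have : ∀ w ∈ T, ∑ N ∈ Finset.range M, c w * u w ^ N * ((starRingEnd ℂ) (u j)) ^ N
        = c w * ∑ N ∈ Finset.range M, (x w) ^ N := by
      intro w hw
      rw [Finset.mul_sum]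
      refine Finset.sum_congr rfl fun N _ => ?_
      rw [hx, mul_pow, mul_assoc]
    rw [Finset.sum_congr rfl this, ← Finset.add_sum_erase _ _ hj, hxj]
    simp
  have htend : Filter.Tendsto (fun M : ℕ => Φ M / M) atTop (𝓝 (c j)) := by
    have herr : Filter.Tendsto
        (fun M : ℕ => (∑ w ∈ T.erase j, c w * ∑ N ∈ Finset.range M, (x w) ^ N) / M)
        atTop (𝓝 0) := by
      have heq : ∀ M : ℕ, (∑ w ∈ T.erase j, c w * ∑ N ∈ Finset.range M, (x w) ^ N) / M
          = ∑ w ∈ T.erase j, (c w * ∑ N ∈ Finset.range M, (x w) ^ N) / M := by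
        intro M; rw [Finset.sum_div]
      simp only [heq]
      rw [show (0 : ℂ) = ∑ w ∈ T.erase j, (0:ℂ) by simp]
      refine tendsto_finset_sum _ fun w hw => ?_
      have hwT : w ∈ T := Finset.mem_of_mem_erase hw
      have hwne : x w ≠ 1 := hx1 w hwT (Finset.ne_of_mem_erase hw)
      have habspos : 0 < ‖x w - 1‖ :=
        norm_pos_iff.mpr (sub_ne_zero.2 hwne)
      have hbd : ∀ M : ℕ, ‖∑ N ∈ Finset.range M, (x w) ^ N‖
          ≤ 2 / ‖x w - 1‖ := by
        intro M
        rw [geom_sum_eq hwne, norm_div]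
        have hnum : ‖x w ^ M - 1‖ ≤ 2 := by
          have h3 := norm_sub_le (x w ^ M) (1 : ℂ)
          simp only [norm_one] at h3
          rw [norm_pow, hxabs w hwT, one_pow] at h3
          linarith
        gcongr
      refine squeeze_zero_norm (fun M => ?_)
        (tendsto_const_div_atTop_nhds_zero_nat (‖c w‖ * (2 / ‖x w - 1‖)))
      rw [norm_div, norm_mul, Complex.norm_natCast]
      have h9 : ‖c w‖ * ‖∑ N ∈ Finset.range M, x w ^ N‖
          ≤ ‖c w‖ * (2 / ‖x w - 1‖) :=
        mul_le_mul_of_nonneg_left (hbd M) (norm_nonneg _)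
      rw [div_eq_mul_inv, div_eq_mul_inv]
      exact mul_le_mul_of_nonneg_right h9 (by positivity)
    have h4 : Filter.Tendsto (fun M : ℕ => c j +
        (∑ w ∈ T.erase j, c w * ∑ N ∈ Finset.range M, (x w) ^ N) / M) atTop (𝓝 (c j)) := by
      simpa using tendsto_const_nhds.add herr
    refine h4.congr' ?_
    filter_upwards [eventually_ge_atTop 1] with M hM
    have hM0 : (M : ℂ) ≠ 0 := Nat.cast_ne_zero.2 (by omega)
    rw [hΦeq M, add_div, mul_div_assoc, div_self hM0, mul_one]
  -- contradiction argument
  have hfreq : ∃ᶠ N in atTop, ‖c j‖ / 2 ≤ ‖h N‖ := by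
    by_contra hcon
    rw [Filter.not_frequently] at hcon
    simp only [not_le] at hcon
    obtain ⟨N₀, hN₀⟩ := Filter.eventually_atTop.1 hcon
    set C₀ : ℝ := ∑ N ∈ Finset.range N₀, ‖h N‖ with hC₀
    set δ : ℝ := ‖c j‖ / 2 with hδ
    have hbound : ∀ᶠ M in atTop, ‖Φ M / M‖ ≤ C₀ / M + δ := by
      filter_upwards [eventually_ge_atTop N₀] with M hM
      have hΦb : ‖Φ M‖ ≤ C₀ + M * δ := by
        calc ‖Φ M‖ ≤ ∑ N ∈ Finset.range M, ‖h N * ((starRingEnd ℂ) (u j)) ^ N‖ := by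
              exact norm_sum_le _ _
          _ = ∑ N ∈ Finset.range M, ‖h N‖ := by
              refine Finset.sum_congr rfl fun N _ => ?_
              rw [norm_mul, norm_pow, huj, one_pow, mul_one]
          _ ≤ C₀ + M * δ := by
              rw [← Finset.sum_range_add_sum_Ico _ hM]
              have hδ0 : (0:ℝ) ≤ δ := by rw [hδ]; positivity
              have h5 : ∑ N ∈ Finset.Ico N₀ M, ‖h N‖ ≤ (M : ℝ) * δ := by
                calc ∑ N ∈ Finset.Ico N₀ M, ‖h N‖
                    ≤ ∑ _N ∈ Finset.Ico N₀ M, δ :=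
                      Finset.sum_le_sum fun N hN => (hN₀ N (Finset.mem_Ico.1 hN).1).le
                  _ = ((M - N₀ : ℕ) : ℝ) * δ := by
                      rw [Finset.sum_const, Nat.card_Ico, nsmul_eq_mul]
                  _ ≤ (M : ℝ) * δ := by
                      apply mul_le_mul_of_nonneg_right ?_ hδ0
                      exact_mod_cast Nat.sub_le M N₀
              rw [hC₀]
              linarith
      rcases Nat.eq_zero_or_pos M with hM0 | hM0
      · subst hM0
        simp
        positivity
      have hMpos : (0:ℝ) < M := by exact_mod_cast hM0
      rw [norm_div, Complex.norm_natCast, div_add' _ _ _ hMpos.ne', div_le_div_iff_of_pos_right hMpos]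
      linarith
    have h7 : ‖c j‖ ≤ δ := by
      have hL : Filter.Tendsto (fun M : ℕ => ‖Φ M / M‖) atTop
          (𝓝 (‖c j‖)) := continuous_norm.continuousAt.tendsto.comp htend
      have hR : Filter.Tendsto (fun M : ℕ => C₀ / M + δ) atTop (𝓝 δ) := by
        simpa using (tendsto_const_div_atTop_nhds_zero_nat C₀).add (tendsto_const_nhds (x := δ))
      exact le_of_tendsto_of_tendsto hL hR hbound
    have : 0 < ‖c j‖ := norm_pos_iff.mpr hcj
    rw [hδ] at h7
    linarith
  refine hfreq.mono fun N hN => ?_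
  rw [hrel N, mul_comm]
  apply mul_le_mul_of_nonneg_left hN
  positivity

private lemma rpow_one_div_tendsto (K : ℝ) (hK : 0 < K) :
    Filter.Tendsto (fun N : ℕ => K ^ ((1:ℝ)/N)) atTop (𝓝 1) := by
  have h2 : Filter.Tendsto (fun N : ℕ => (1:ℝ)/N) atTop (𝓝 0) :=
    tendsto_one_div_atTop_nhds_zero_nat
  have h3 : Filter.Tendsto (fun y : ℝ => K ^ y) (𝓝 0) (𝓝 1) := by
    have := (Real.continuousAt_const_rpow (a := K) (b := (0:ℝ)) hK.ne').tendsto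
    rwa [Real.rpow_zero] at this
  exact h3.comp h2

/-- Let `α`, `β` be multisets of complex numbers, `ρ = max(max |α_k|, max |β_l|) > 0`,
and suppose the multisets of elements of modulus `ρ` in `α` and `β` differ. Then
`limsup_N |Σ α_k^N − Σ β_l^N|^{1/N} = ρ`. -/
theorem power_sum_difference_limsup (α β : Multiset ℂ) (ρ : ℝ) (hρpos : 0 < ρ)
    (hbound : ∀ z ∈ α + β, ‖z‖ ≤ ρ)
    (hattained : ∃ z ∈ α + β, ‖z‖ = ρ)
    (hne : α.filter (fun z => ‖z‖ = ρ) ≠ β.filter (fun z => ‖z‖ = ρ)) :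
    Filter.limsup
      (fun N : ℕ =>
        (‖(α.map (fun z => z ^ N)).sum - (β.map (fun z => z ^ N)).sum‖)
          ^ ((1 : ℝ) / N)) Filter.atTop = ρ := by
  set P := α.filter (fun z => ‖z‖ = ρ) with hP
  set Q := β.filter (fun z => ‖z‖ = ρ) with hQ
  set Pc := α.filter (fun z => ¬ ‖z‖ = ρ) with hPc
  set Qc := β.filter (fun z => ¬ ‖z‖ = ρ) with hQc
  have hPdec : P + Pc = α := Multiset.filter_add_not _ α
  have hQdec : Q + Qc = β := Multiset.filter_add_not _ β
  set T := (P + Q).toFinset with hT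
  set c : ℂ → ℂ := fun w => (P.count w : ℂ) - (Q.count w : ℂ) with hc
  have hTmod : ∀ w ∈ T, ‖w‖ = ρ := by
    intro w hw
    rw [hT, Multiset.mem_toFinset, Multiset.mem_add] at hw
    rcases hw with hw | hw
    · rw [hP] at hw
      exact (Multiset.mem_filter.1 hw).2
    · rw [hQ] at hw
      exact (Multiset.mem_filter.1 hw).2
  -- the top part as a finset sum
  have htop : ∀ N : ℕ, (P.map (fun z => z ^ N)).sum - (Q.map (fun z => z ^ N)).sum
      = ∑ w ∈ T, c w * w ^ N := by
    intro N
    have key : ∀ (R : Multiset ℂ), R.toFinset ⊆ T →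
        (R.map (fun z => z ^ N)).sum = ∑ w ∈ T, (R.count w : ℂ) * w ^ N := by
      intro R hsub
      calc (R.map (fun z => z ^ N)).sum
          = ∑ w ∈ R.toFinset, R.count w • (w ^ N) := Finset.sum_multiset_map_count _ _
        _ = ∑ w ∈ R.toFinset, (R.count w : ℂ) * w ^ N := by
            refine Finset.sum_congr rfl fun w _ => ?_
            rw [nsmul_eq_mul]
        _ = ∑ w ∈ T, (R.count w : ℂ) * w ^ N := by
            refine Finset.sum_subset hsub fun w _ hw => ?_
            rw [Multiset.count_eq_zero_of_notMem
              (fun hmem => hw (Multiset.mem_toFinset.2 hmem))]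
            simp
    have hPsub : P.toFinset ⊆ T := by
      intro w hw
      rw [Multiset.mem_toFinset] at hw
      rw [hT, Multiset.mem_toFinset]
      exact Multiset.mem_add.2 (Or.inl hw)
    have hQsub : Q.toFinset ⊆ T := by
      intro w hw
      rw [Multiset.mem_toFinset] at hw
      rw [hT, Multiset.mem_toFinset]
      exact Multiset.mem_add.2 (Or.inr hw)
    rw [key P hPsub, key Q hQsub, ← Finset.sum_sub_distrib]
    refine Finset.sum_congr rfl fun w _ => ?_
    rw [hc, sub_mul]
  -- existence of a witness j
  obtain ⟨j, hjcount⟩ : ∃ w, P.count w ≠ Q.count w := by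
    by_contra hcon
    push_neg at hcon
    exact hne (Multiset.ext.2 hcon)
  have hcj : c j ≠ 0 := by
    rw [hc]
    simp only [ne_eq, sub_eq_zero]
    exact_mod_cast hjcount
  have hjT : j ∈ T := by
    rw [hT, Multiset.mem_toFinset, Multiset.mem_add]
    rcases Nat.eq_zero_or_pos (P.count j) with h1 | h1
    · rcases Nat.eq_zero_or_pos (Q.count j) with h2 | h2
      · exact absurd (h1.trans h2.symm) hjcount
      · exact Or.inr (Multiset.count_pos.1 h2)
    · exact Or.inl (Multiset.count_pos.1 h1)
  have hfreqg := freq_large ρ hρpos T hTmod c j hjT hcj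
  set δ : ℝ := ‖c j‖ / 2 with hδ
  have hδpos : 0 < δ := by
    rw [hδ]
    have := norm_pos_iff.mpr hcj
    positivity
  -- the small part
  have hsmallmod : ∀ z ∈ Pc + Qc, ‖z‖ < ρ := by
    intro z hz
    rcases Multiset.mem_add.1 hz with hz | hz
    · rw [hPc] at hz
      rw [Multiset.mem_filter] at hz
      exact lt_of_le_of_ne (hbound z (Multiset.mem_add.2 (Or.inl hz.1))) hz.2
    · rw [hQc] at hz
      rw [Multiset.mem_filter] at hz
      exact lt_of_le_of_ne (hbound z (Multiset.mem_add.2 (Or.inr hz.1))) hz.2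
  have hst := small_tendsto ρ hρpos (Pc + Qc) hsmallmod
  have hsb : ∀ N : ℕ,
      ‖(Pc.map (fun z => z ^ N)).sum - (Qc.map (fun z => z ^ N)).sum‖
      ≤ ((Pc + Qc).map (fun z => (‖z‖ / ρ) ^ N)).sum * ρ ^ N := by
    intro N
    have habs : ∀ (R : Multiset ℂ), ‖(R.map (fun z => z ^ N)).sum‖
        ≤ (R.map (fun z => ‖z‖ ^ N)).sum := by
      intro R
      have h1 := norm_multiset_sum_le (R.map (fun z => z ^ N))
      rw [Multiset.map_map] at h1
      calc ‖(R.map (fun z => z ^ N)).sum‖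
          = ‖(R.map (fun z => z ^ N)).sum‖ := rfl
        _ ≤ (R.map (fun z => ‖z ^ N‖)).sum := by
            have := norm_multiset_sum_le (R.map (fun z => z ^ N))
            rwa [Multiset.map_map] at this
        _ = (R.map (fun z => ‖z‖ ^ N)).sum := by
            congr 1
            apply Multiset.map_congr rfl
            intro z _
            rw [norm_pow]
    have h2 : ((Pc + Qc).map (fun z => (‖z‖ / ρ) ^ N)).sum * ρ ^ N
        = ((Pc + Qc).map (fun z => ‖z‖ ^ N)).sum := by
      rw [← Multiset.sum_map_mul_right]
      apply congrArg
      apply Multiset.map_congr rfl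
      intro z _
      rw [div_pow, div_mul_cancel₀]
      positivity
    rw [h2, Multiset.map_add, Multiset.sum_add]
    calc ‖(Pc.map (fun z => z ^ N)).sum - (Qc.map (fun z => z ^ N)).sum‖
        ≤ ‖(Pc.map (fun z => z ^ N)).sum‖
          + ‖(Qc.map (fun z => z ^ N)).sum‖ := by
          have := norm_sub_le ((Pc.map (fun z => z ^ N)).sum) ((Qc.map (fun z => z ^ N)).sum)
          simpa using this
      _ ≤ _ := add_le_add (habs Pc) (habs Qc)
  have hsev : ∀ᶠ N in atTop,
      ‖(Pc.map (fun z => z ^ N)).sum - (Qc.map (fun z => z ^ N)).sum‖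
      ≤ δ / 2 * ρ ^ N := by
    have hlt := hst.eventually (eventually_lt_nhds (show (0:ℝ) < δ / 2 by positivity))
    filter_upwards [hlt] with N hN
    refine (hsb N).trans ?_
    apply mul_le_mul_of_nonneg_right hN.le
    positivity
  -- frequently the full difference is large
  have hfreqF : ∃ᶠ N in atTop, δ / 2 * ρ ^ N ≤
      ‖(α.map (fun z => z ^ N)).sum - (β.map (fun z => z ^ N)).sum‖ := by
    refine (hfreqg.and_eventually hsev).mono ?_
    rintro N ⟨h1, h2⟩
    have hdecomp : (α.map (fun z => z ^ N)).sum - (β.map (fun z => z ^ N)).sum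
        = (∑ w ∈ T, c w * w ^ N)
          + ((Pc.map (fun z => z ^ N)).sum - (Qc.map (fun z => z ^ N)).sum) := by
      rw [← htop N, ← hPdec, ← hQdec, Multiset.map_add, Multiset.map_add,
        Multiset.sum_add, Multiset.sum_add]
      ring
    rw [hdecomp]
    have h3 : ‖∑ w ∈ T, c w * w ^ N‖
        ≤ ‖(∑ w ∈ T, c w * w ^ N)
            + ((Pc.map (fun z => z ^ N)).sum - (Qc.map (fun z => z ^ N)).sum)‖
          + ‖(Pc.map (fun z => z ^ N)).sum - (Qc.map (fun z => z ^ N)).sum‖ := by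
      have := norm_sub_le ((∑ w ∈ T, c w * w ^ N)
        + ((Pc.map (fun z => z ^ N)).sum - (Qc.map (fun z => z ^ N)).sum))
        ((Pc.map (fun z => z ^ N)).sum - (Qc.map (fun z => z ^ N)).sum)
      simpa using this
    simp only [hδ] at h1 h2 ⊢
    linarith
  -- limsup computation
  set F : ℕ → ℂ := fun N => (α.map (fun z => z ^ N)).sum - (β.map (fun z => z ^ N)).sum
    with hF
  set K : ℝ := (Multiset.card α : ℝ) + Multiset.card β with hK
  have hK1 : (1:ℝ) ≤ K := by
    obtain ⟨z₀, hz₀, _⟩ := hattained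
    have h0 : 0 < Multiset.card (α + β) := Multiset.card_pos.2 fun h => by simp [h] at hz₀
    rw [Multiset.card_add] at h0
    rw [hK]
    exact_mod_cast h0
  have hKpos : (0:ℝ) < K := lt_of_lt_of_le one_pos hK1
  have hFb : ∀ N : ℕ, ‖F N‖ ≤ K * ρ ^ N := by
    intro N
    have hR : ∀ (R : Multiset ℂ), (∀ z ∈ R, ‖z‖ ≤ ρ) →
        ‖(R.map (fun z => z ^ N)).sum‖ ≤ (Multiset.card R : ℝ) * ρ ^ N := by
      intro R hRb
      calc ‖(R.map (fun z => z ^ N)).sum‖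
          = ‖(R.map (fun z => z ^ N)).sum‖ := rfl
        _ ≤ ((R.map (fun z => z ^ N)).map norm).sum := norm_multiset_sum_le _
        _ ≤ (Multiset.card R : ℝ) * ρ ^ N := by
            rw [Multiset.map_map]
            have h5 : ((R.map (norm ∘ fun z => z ^ N)).sum)
                ≤ Multiset.card (R.map (norm ∘ fun z => z ^ N)) • (ρ ^ N) := by
              apply Multiset.sum_le_card_nsmul
              intro x hx
              obtain ⟨z, hz, rfl⟩ := Multiset.mem_map.1 hx
              simp only [Function.comp, norm_pow]
              exact pow_le_pow_left₀ (norm_nonneg _) (hRb z hz) N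
            rwa [Multiset.card_map, nsmul_eq_mul] at h5
    have hα : ∀ z ∈ α, ‖z‖ ≤ ρ := fun z hz =>
      hbound z (Multiset.mem_add.2 (Or.inl hz))
    have hβ : ∀ z ∈ β, ‖z‖ ≤ ρ := fun z hz =>
      hbound z (Multiset.mem_add.2 (Or.inr hz))
    have h6 := norm_sub_le ((α.map (fun z => z ^ N)).sum) ((β.map (fun z => z ^ N)).sum)
    have h7 := hR α hα
    have h8 := hR β hβ
    rw [hF, hK]
    simp only
    calc ‖(α.map (fun z => z ^ N)).sum - (β.map (fun z => z ^ N)).sum‖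
        ≤ ‖(α.map (fun z => z ^ N)).sum‖
          + ‖(β.map (fun z => z ^ N)).sum‖ := h6
      _ ≤ (Multiset.card α : ℝ) * ρ ^ N + (Multiset.card β : ℝ) * ρ ^ N := add_le_add h7 h8
      _ = ((Multiset.card α : ℝ) + Multiset.card β) * ρ ^ N := by ring
  have hρN : ∀ N : ℕ, 1 ≤ N → ((ρ ^ N : ℝ)) ^ ((1:ℝ)/N) = ρ := by
    intro N hN
    have hN0 : (N:ℝ) ≠ 0 := Nat.cast_ne_zero.2 (by omega)
    rw [← Real.rpow_natCast ρ N, ← Real.rpow_mul hρpos.le, mul_one_div_cancel hN0,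
      Real.rpow_one]
  have hub : ∀ N : ℕ, 1 ≤ N →
      ‖F N‖ ^ ((1:ℝ)/N) ≤ K ^ ((1:ℝ)/N) * ρ := by
    intro N hN
    have h1 : ‖F N‖ ^ ((1:ℝ)/N) ≤ (K * ρ ^ N) ^ ((1:ℝ)/N) :=
      Real.rpow_le_rpow (norm_nonneg _) (hFb N) (by positivity)
    rw [Real.mul_rpow hKpos.le (by positivity), hρN N hN] at h1
    exact h1
  have hbdd_u : IsBoundedUnder (· ≤ ·) atTop
      (fun N : ℕ => ‖F N‖ ^ ((1:ℝ)/N)) := by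
    apply isBoundedUnder_of
    refine ⟨max 1 (K * ρ), fun N => ?_⟩
    rcases Nat.eq_zero_or_pos N with h0 | h0
    · subst h0
      simp only [Nat.cast_zero, div_zero, Real.rpow_zero]
      exact le_max_left _ _
    · refine le_trans (hub N h0) (le_trans ?_ (le_max_right _ _))
      apply mul_le_mul_of_nonneg_right ?_ hρpos.le
      have := Real.rpow_le_rpow_of_exponent_le hK1
        (show (1:ℝ)/N ≤ 1 by
          rw [div_le_one (by exact_mod_cast h0)]
          exact_mod_cast h0)
      rwa [Real.rpow_one] at this
  have hcb : IsCoboundedUnder (· ≤ ·) atTop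
      (fun N : ℕ => ‖F N‖ ^ ((1:ℝ)/N)) :=
    Filter.isCoboundedUnder_le_of_le atTop (x := 0)
      (fun N => Real.rpow_nonneg (norm_nonneg _) _)
  have hKt : Filter.Tendsto (fun N : ℕ => K ^ ((1:ℝ)/N) * ρ) atTop (𝓝 ρ) := by
    have := (rpow_one_div_tendsto K hKpos).mul_const ρ
    rwa [one_mul] at this
  have hupper : Filter.limsup (fun N : ℕ => ‖F N‖ ^ ((1:ℝ)/N)) atTop ≤ ρ := by
    have h1 := Filter.limsup_le_limsup
      (f := atTop)
      (u := fun N : ℕ => ‖F N‖ ^ ((1:ℝ)/N))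
      (v := fun N : ℕ => K ^ ((1:ℝ)/N) * ρ)
      (by filter_upwards [eventually_ge_atTop 1] with N hN; exact hub N hN)
      hcb hKt.isBoundedUnder_le
    rwa [hKt.limsup_eq] at h1
  have hlower : ρ ≤ Filter.limsup (fun N : ℕ => ‖F N‖ ^ ((1:ℝ)/N)) atTop := by
    refine le_of_forall_sub_le fun ε hε => ?_
    have hδ2pos : (0:ℝ) < δ / 2 := div_pos hδpos two_pos
    have hδ2t : Filter.Tendsto (fun N : ℕ => (δ/2) ^ ((1:ℝ)/N) * ρ) atTop (𝓝 ρ) := by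
      have := (rpow_one_div_tendsto (δ/2) hδ2pos).mul_const ρ
      rwa [one_mul] at this
    have hev : ∀ᶠ N : ℕ in atTop, ρ - ε < (δ/2) ^ ((1:ℝ)/N) * ρ :=
      hδ2t.eventually (eventually_gt_nhds (by linarith))
    have hfreq2 : ∃ᶠ N in atTop, ρ - ε ≤ ‖F N‖ ^ ((1:ℝ)/N) := by
      refine (hfreqF.and_eventually (hev.and (eventually_ge_atTop 1))).mono ?_
      rintro N ⟨h1, h2, hN1⟩
      have h3 : (δ/2 * ρ ^ N) ^ ((1:ℝ)/N) ≤ ‖F N‖ ^ ((1:ℝ)/N) :=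
        Real.rpow_le_rpow (mul_nonneg hδ2pos.le (by positivity)) h1 (by positivity)
      rw [Real.mul_rpow hδ2pos.le (by positivity), hρN N hN1] at h3
      exact le_trans h2.le h3
    exact Filter.le_limsup_of_frequently_le hfreq2 hbdd_u
  exact le_antisymm hupper hlower
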